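/- Let G be a group that is m-boundedly simple, i.e., for every nontrivial g ∈ G, every element of G can be written as a product of at most m elements each of which is conjugate to g or to g⁻¹. Then every pseudocharacter on G is identically zero. (Hence G admits no nontrivial pseudocharacters.) -/

import Mathlib

/-- A function `F : G → ℝ` is a quasicharacter if there is a constant `C ≥ 0` with
`|F(xy) − F(x) − F(y)| ≤ C` for all `x, y`. -/
def IsQuasicharacter {G : Type*} [Group G] (F : G → ℝ) : Prop :=
  ∃ C : ℝ, 0 ≤ C ∧ ∀ x y : G, |F (x * y) - F x - F y| ≤ C

/-- A pseudocharacter is a quasicharacter satisfying `f(gⁿ) = n·f(g)` for all integers `n`. -/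
def IsPseudocharacter {G : Type*} [Group G] (f : G → ℝ) : Prop :=
  IsQuasicharacter f ∧ ∀ (g : G) (n : ℤ), f (g ^ n) = n * f g

/-- A group `G` is `m`-boundedly simple if for every nontrivial `g`, every element of `G`
is a product of at most `m` elements, each conjugate to `g` or to `g⁻¹`. -/
def IsBoundedlySimple {G : Type*} [Group G] (m : ℕ) : Prop :=
  ∀ g : G, g ≠ 1 → ∀ x : G, ∃ L : List G,
    L.length ≤ m ∧ (∀ h ∈ L, IsConj g h ∨ IsConj g⁻¹ h) ∧ L.prod = x

section Aux

variable {G : Type*} [Group G] {f : G → ℝ}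

lemma pseudo_inv (hf : IsPseudocharacter f) (g : G) : f g⁻¹ = - f g := by
  have := hf.2 g (-1)
  simpa using this

lemma pseudo_one (hf : IsPseudocharacter f) : f 1 = 0 := by
  have := hf.2 1 0
  simpa using this

lemma list_abs_sum {L : List ℝ} {b : ℝ} (hb : 0 ≤ b) (h : ∀ r ∈ L, |r| ≤ b) :
    |L.sum| ≤ (L.length : ℝ) * b := by
  induction L with
  | nil => simp
  | cons a t ih =>
    have ha := h a (List.mem_cons_self)
    have ht := ih (fun r hr => h r (List.mem_cons_of_mem a hr))
    simp only [List.sum_cons, List.length_cons]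
    calc |a + t.sum| ≤ |a| + |t.sum| := abs_add_le _ _
      _ ≤ b + (t.length : ℝ) * b := by gcongr
      _ = ((t.length + 1 : ℕ) : ℝ) * b := by push_cast; ring

lemma pseudo_conj (hf : IsPseudocharacter f) {g h : G} (hc : IsConj g h) : f h = f g := by
  obtain ⟨C, hC0, hC⟩ := hf.1
  obtain ⟨c, hcgh⟩ := isConj_iff.mp hc
  have key : ∀ y : G, |f (c * y * c⁻¹) - f y| ≤ 2 * C := by
    intro y
    have h1 := hC (c * y) c⁻¹
    have h2 := hC c y
    have hinv : f c⁻¹ = - f c := pseudo_inv hf c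
    have h3 : f (c * y * c⁻¹) - f y =
        (f (c * y * c⁻¹) - f (c * y) - f c⁻¹) + (f (c * y) - f c - f y) := by
      rw [hinv]; ring
    rw [h3]
    exact (abs_add_le _ _).trans (by linarith)
  have hn : ∀ n : ℕ, (n : ℝ) * |f h - f g| ≤ 2 * C := by
    intro n
    have hpow : c * g ^ (n : ℤ) * c⁻¹ = h ^ (n : ℤ) := by
      rw [← hcgh]; exact conj_zpow.symm
    have hb := key (g ^ (n : ℤ))
    rw [hpow, hf.2 g, hf.2 h] at hb
    have ecast : |((n : ℤ) : ℝ)| = (n : ℝ) := by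
      push_cast; exact abs_of_nonneg (Nat.cast_nonneg n)
    have e : (n : ℝ) * |f h - f g| = |((n : ℤ) : ℝ) * f h - ((n : ℤ) : ℝ) * f g| := by
      rw [← mul_sub, abs_mul, ecast]
    rw [e]
    exact hb
  by_contra hne
  have hpos : 0 < |f h - f g| := abs_pos.mpr (sub_ne_zero.mpr hne)
  obtain ⟨n, hnn⟩ := exists_nat_gt ((2 * C) / |f h - f g|)
  have h2 := hn n
  rw [div_lt_iff₀ hpos] at hnn
  linarith

lemma quasi_list (hf : IsQuasicharacter f) (h1 : f 1 = 0) : ∃ C : ℝ, 0 ≤ C ∧ ∀ L : List G,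
    |f L.prod - (L.map f).sum| ≤ (L.length : ℝ) * C := by
  obtain ⟨C, hC0, hC⟩ := hf
  refine ⟨C, hC0, ?_⟩
  intro L
  induction L with
  | nil => simp [h1]
  | cons a t ih =>
    have h2 := hC a t.prod
    simp only [List.prod_cons, List.map_cons, List.sum_cons, List.length_cons]
    calc |f (a * t.prod) - (f a + (t.map f).sum)|
        = |(f (a * t.prod) - f a - f t.prod) + (f t.prod - (t.map f).sum)| := by ring_nf
      _ ≤ |f (a * t.prod) - f a - f t.prod| + |f t.prod - (t.map f).sum| := abs_add_le _ _
      _ ≤ C + (t.length : ℝ) * C := by gcongr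
      _ = ((t.length + 1 : ℕ) : ℝ) * C := by push_cast; ring

end Aux

/-- If `G` is `m`-boundedly simple, then every pseudocharacter on `G` is identically zero. -/
theorem boundedly_simple_pseudocharacter_trivial {G : Type*} [Group G] (m : ℕ)
    (hG : IsBoundedlySimple (G := G) m) (f : G → ℝ) (hf : IsPseudocharacter f) :
    ∀ x : G, f x = 0 := by
  intro x
  by_cases hx : x = 1
  · rw [hx]; exact pseudo_one hf
  have h1 : f 1 = 0 := pseudo_one hf
  obtain ⟨C, hC0, hlist⟩ := quasi_list hf.1 h1
  have key : ∀ n : ℤ, |f (x ^ n)| ≤ (m : ℝ) * |f x| + (m : ℝ) * C := by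
    intro n
    obtain ⟨L, hlen, hmem, hprod⟩ := hG x hx (x ^ n)
    have hvals : ∀ r ∈ L.map f, |r| ≤ |f x| := by
      intro r hr
      obtain ⟨a, ha, rfl⟩ := List.mem_map.mp hr
      rcases hmem a ha with hc | hc
      · rw [pseudo_conj hf hc]
      · rw [pseudo_conj hf hc, pseudo_inv hf, abs_neg]
    have hsum : |(L.map f).sum| ≤ (L.length : ℝ) * |f x| := by
      have := list_abs_sum (abs_nonneg (f x)) hvals
      simpa using this
    have hl := hlist L
    rw [hprod] at hl
    have hlm : (L.length : ℝ) ≤ (m : ℝ) := by exact_mod_cast hlen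
    have habs : |f (x ^ n)| ≤ |f (x ^ n) - (L.map f).sum| + |(L.map f).sum| := by
      have := abs_add_le (f (x ^ n) - (L.map f).sum) ((L.map f).sum)
      simpa using this
    have hfx := abs_nonneg (f x)
    nlinarith [hl, hsum, habs]
  by_contra hne
  have hpos : 0 < |f x| := abs_pos.mpr hne
  obtain ⟨n, hn⟩ := exists_nat_gt (((m : ℝ) * |f x| + (m : ℝ) * C) / |f x|)
  have hk := key (n : ℤ)
  rw [hf.2 x (n : ℤ)] at hk
  have e : |((n : ℤ) : ℝ) * f x| = (n : ℝ) * |f x| := by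
    rw [abs_mul]
    push_cast
    rw [abs_of_nonneg (Nat.cast_nonneg n)]
  rw [e] at hk
  rw [div_lt_iff₀ hpos] at hn
  linarith
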